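/- With ψ(θ) = μθ + (σ²/2)θ² - aθ/(θ+c) having distinct roots -β₂ < -c < -β₁ < 0 < Φ of ψ(θ) = q, and W_q(x) = e^{-β₂ x}/ψ'(-β₂) + e^{-β₁ x}/ψ'(-β₁) + e^{Φ x}/ψ'(Φ), the Laplace transform identity ∫₀^∞ e^{-θx} W_q(x) dx = 1/(ψ(θ) - q) holds for all θ > Φ. -/

import Mathlib

open Real Set MeasureTheory Filter Topology

lemma quad_zero {A B C x1 x2 x3 : ℝ} (h12 : x1 ≠ x2) (h13 : x1 ≠ x3) (h23 : x2 ≠ x3)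
    (e1 : A*x1^2 + B*x1 + C = 0) (e2 : A*x2^2 + B*x2 + C = 0)
    (e3 : A*x3^2 + B*x3 + C = 0) : A = 0 ∧ B = 0 ∧ C = 0 := by
  have d12 : x1 - x2 ≠ 0 := sub_ne_zero.2 h12
  have d13 : x1 - x3 ≠ 0 := sub_ne_zero.2 h13
  have d23 : x2 - x3 ≠ 0 := sub_ne_zero.2 h23
  have g12 : A*(x1+x2) + B = 0 := by
    have h : (x1 - x2) * (A*(x1+x2) + B) = 0 := by linear_combination e1 - e2
    exact (mul_eq_zero.1 h).resolve_left d12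
  have g13 : A*(x1+x3) + B = 0 := by
    have h : (x1 - x3) * (A*(x1+x3) + B) = 0 := by linear_combination e1 - e3
    exact (mul_eq_zero.1 h).resolve_left d13
  have hA : A = 0 := by
    have h : (x2 - x3) * A = 0 := by linear_combination g12 - g13
    exact (mul_eq_zero.1 h).resolve_left d23
  have hB : B = 0 := by linear_combination g12 - (x1+x2)*hA
  have hC : C = 0 := by linear_combination e1 - x1^2*hA - x1*hB
  exact ⟨hA, hB, hC⟩

lemma int_exp {b : ℝ} (hb : 0 < b) : (∫ x in Ioi (0:ℝ), Real.exp (-b*x)) = 1/b := by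
  have hd : ∀ x ∈ Ici (0:ℝ), HasDerivAt (fun x => -Real.exp (-b*x)/b) (Real.exp (-b*x)) x := by
    intro x _
    have h := (((hasDerivAt_id x).const_mul (-b)).exp.neg.div_const b)
    refine h.congr_deriv ?_
    simp only [id]
    field_simp
  have ht : Tendsto (fun x => -Real.exp (-b*x)/b) atTop (𝓝 0) := by
    have h1 : Tendsto (fun x:ℝ => -b*x) atTop atBot := tendsto_id.const_mul_atTop_of_neg (by linarith)
    have h2 := (Real.tendsto_exp_atBot.comp h1).neg.div_const b
    simpa using h2
  have := integral_Ioi_of_hasDerivAt_of_tendsto' hd (exp_neg_integrableOn_Ioi 0 hb) ht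
  rw [this]
  simp [Real.exp_zero]
  ring

lemma deriv_aux (k b2 b1 p c q r D : ℝ) (h : r + c ≠ 0)
    (hD : D = (((k*1*(r+b1) + k*(r+b2)*1)*(r-p) + k*(r+b2)*(r+b1)*1)*(r+c)
        - k*(r+b2)*(r+b1)*(r-p)*1) / (r+c)^2) :
    HasDerivAt (fun θ : ℝ => k*(θ+b2)*(θ+b1)*(θ-p)/(θ+c) + q) D r := by
  rw [hD]
  exact ((((((hasDerivAt_id r).add_const b2).const_mul k).mul ((hasDerivAt_id r).add_const b1)).mul
    ((hasDerivAt_id r).sub_const p)).div ((hasDerivAt_id r).add_const c) h).add_const q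

set_option maxHeartbeats 1600000 in
/-- Laplace transform of the scale function: ∫₀^∞ e^{-θx} W_q(x) dx = 1/(ψ(θ) - q)
for θ > Φ. -/
theorem scale_function_laplace_transform (μ σ a c q β₁ β₂ Φ : ℝ) (hσ : 0 ≤ σ) (ha : 0 < a)
    (hc : 0 < c) (hq : 0 < q) (ψ : ℝ → ℝ)
    (hψ : ∀ θ : ℝ, θ ≠ -c → ψ θ = μ * θ + σ ^ 2 / 2 * θ ^ 2 - a * θ / (θ + c))
    (h21 : -β₂ < -c) (h1c : -c < -β₁) (h10 : -β₁ < 0) (hΦ : 0 < Φ)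
    (hr2 : ψ (-β₂) = q) (hr1 : ψ (-β₁) = q) (hrΦ : ψ Φ = q)
    (hd2 : deriv ψ (-β₂) ≠ 0) (hd1 : deriv ψ (-β₁) ≠ 0) (hdΦ : deriv ψ Φ ≠ 0) :
    ∀ θ : ℝ, Φ < θ →
      MeasureTheory.IntegrableOn
        (fun x : ℝ => Real.exp (-θ * x) *
          (Real.exp (-β₂ * x) / deriv ψ (-β₂) + Real.exp (-β₁ * x) / deriv ψ (-β₁) +
            Real.exp (Φ * x) / deriv ψ Φ)) (Set.Ioi 0) ∧
      (∫ x in Set.Ioi (0 : ℝ),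
          Real.exp (-θ * x) *
            (Real.exp (-β₂ * x) / deriv ψ (-β₂) + Real.exp (-β₁ * x) / deriv ψ (-β₁) +
              Real.exp (Φ * x) / deriv ψ Φ)) = 1 / (ψ θ - q) := by
  -- basic sign facts
  have hb1 : 0 < β₁ := by linarith
  have hb2 : c < β₂ := by linarith
  have hb1c : β₁ < c := by linarith
  have hne2 : (-β₂ : ℝ) ≠ -c := by intro h; rw [h] at h21; exact lt_irrefl _ h21
  have hne1 : (-β₁ : ℝ) ≠ -c := by intro h; rw [h] at h1c; exact lt_irrefl _ h1c
  have hneΦ : (Φ : ℝ) ≠ -c := by intro h; nlinarith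
  have hc2 : (-β₂ : ℝ) + c ≠ 0 := by intro h; apply hne2; linarith
  have hc1 : (-β₁ : ℝ) + c ≠ 0 := by intro h; apply hne1; linarith
  have hcΦ : (Φ : ℝ) + c ≠ 0 := by intro h; apply hneΦ; linarith
  -- root equations
  have E2 : (μ*(-β₂) + σ^2/2*(-β₂)^2 - q)*((-β₂)+c) = a*(-β₂) := by
    have h := hr2; rw [hψ _ hne2] at h
    field_simp at h
    linarith
  have E1 : (μ*(-β₁) + σ^2/2*(-β₁)^2 - q)*((-β₁)+c) = a*(-β₁) := by
    have h := hr1; rw [hψ _ hne1] at h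
    field_simp at h
    linarith
  have EΦ : (μ*Φ + σ^2/2*Φ^2 - q)*(Φ+c) = a*Φ := by
    have h := hrΦ; rw [hψ _ hneΦ] at h
    field_simp at h
    linarith
  -- coefficient identities via quad_zero
  set k := σ^2/2 with hkdef
  obtain ⟨hA, hB, hC⟩ := quad_zero (A := μ + k*c - k*(β₁+β₂-Φ))
      (B := μ*c - a - q - k*(β₁*β₂ - Φ*β₁ - Φ*β₂)) (C := -q*c + k*(β₁*β₂*Φ))
      (x1 := -β₂) (x2 := -β₁) (x3 := Φ)
      (by intro h; linarith)
      (by intro h; linarith) (by intro h; linarith)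
      (by linear_combination E2) (by linear_combination E1) (by linear_combination EΦ)
  have hb2' : (0:ℝ) < β₂ := by linarith
  have hp : (0:ℝ) < β₁*β₂*Φ := by positivity
  have hkpos : 0 < k := by nlinarith [hp, mul_pos hq hc]
  have hkne : k ≠ 0 := ne_of_gt hkpos
  -- factorization of ψ - q
  have key : ∀ θ:ℝ, (μ*θ + k*θ^2 - q)*(θ+c) - a*θ = k*(θ+β₂)*(θ+β₁)*(θ-Φ) := by
    intro θ
    linear_combination θ^2*hA + θ*hB + hC
  have hfac : ∀ θ:ℝ, θ + c ≠ 0 → ψ θ - q = k*(θ+β₂)*(θ+β₁)*(θ-Φ)/(θ+c) := by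
    intro θ hθ
    have hθ' : θ ≠ -c := by intro h; apply hθ; rw [h]; ring
    rw [hψ θ hθ']
    rw [eq_div_iff hθ]
    field_simp
    linear_combination key θ
  -- the function g agreeing with ψ near each root
  set g : ℝ → ℝ := fun θ => k*(θ+β₂)*(θ+β₁)*(θ-Φ)/(θ+c) + q with hgdef
  have hev : ∀ r : ℝ, r ≠ -c → ψ =ᶠ[𝓝 r] g := by
    intro r hr
    filter_upwards [eventually_ne_nhds hr] with x hx
    have hxc : x + c ≠ 0 := by intro h; apply hx; linarith
    have := hfac x hxc
    simp only [hgdef]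
    linarith
  -- derivative values
  have hd2val : deriv ψ (-β₂) = k*((-β₂)+β₁)*((-β₂)-Φ)/((-β₂)+c) := by
    rw [(hev _ hne2).deriv_eq]
    refine HasDerivAt.deriv (deriv_aux k β₂ β₁ Φ c q (-β₂) _ hc2 ?_)
    field_simp
    ring
  have hd1val : deriv ψ (-β₁) = k*((-β₁)+β₂)*((-β₁)-Φ)/((-β₁)+c) := by
    rw [(hev _ hne1).deriv_eq]
    refine HasDerivAt.deriv (deriv_aux k β₂ β₁ Φ c q (-β₁) _ hc1 ?_)
    field_simp
    ring
  have hdΦval : deriv ψ Φ = k*(Φ+β₂)*(Φ+β₁)/(Φ+c) := by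
    rw [(hev _ hneΦ).deriv_eq]
    refine HasDerivAt.deriv (deriv_aux k β₂ β₁ Φ c q Φ _ hcΦ ?_)
    field_simp
    ring
  -- main part
  intro θ hθ
  have ht2 : 0 < θ - (-β₂) := by linarith
  have ht1 : 0 < θ - (-β₁) := by linarith
  have ht0 : 0 < θ - Φ := by linarith
  have hθc : θ + c ≠ 0 := by intro h; linarith
  set d2 := deriv ψ (-β₂)
  set d1 := deriv ψ (-β₁)
  set d0 := deriv ψ Φ
  have hfun : ∀ x : ℝ, Real.exp (-θ * x) *
      (Real.exp (-β₂ * x) / d2 + Real.exp (-β₁ * x) / d1 + Real.exp (Φ * x) / d0)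
      = Real.exp (-(θ - (-β₂))*x) / d2 + Real.exp (-(θ - (-β₁))*x) / d1
        + Real.exp (-(θ - Φ)*x) / d0 := by
    intro x
    rw [mul_add, mul_add, div_eq_mul_inv (Real.exp (-β₂*x)), div_eq_mul_inv (Real.exp (-β₁*x)),
      div_eq_mul_inv (Real.exp (Φ*x)), ← mul_assoc, ← mul_assoc, ← mul_assoc,
      ← Real.exp_add, ← Real.exp_add, ← Real.exp_add,
      show -θ*x + -β₂*x = -(θ - (-β₂))*x by ring,
      show -θ*x + -β₁*x = -(θ - (-β₁))*x by ring,
      show -θ*x + Φ*x = -(θ - Φ)*x by ring,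
      div_eq_mul_inv, div_eq_mul_inv, div_eq_mul_inv]
  have hI2 : IntegrableOn (fun x : ℝ => Real.exp (-(θ - (-β₂))*x) / d2) (Ioi 0) :=
    (exp_neg_integrableOn_Ioi 0 ht2).div_const d2
  have hI1 : IntegrableOn (fun x : ℝ => Real.exp (-(θ - (-β₁))*x) / d1) (Ioi 0) :=
    (exp_neg_integrableOn_Ioi 0 ht1).div_const d1
  have hI0 : IntegrableOn (fun x : ℝ => Real.exp (-(θ - Φ)*x) / d0) (Ioi 0) :=
    (exp_neg_integrableOn_Ioi 0 ht0).div_const d0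
  have hI21 : IntegrableOn (fun x : ℝ => Real.exp (-(θ - (-β₂))*x) / d2
      + Real.exp (-(θ - (-β₁))*x) / d1) (Ioi 0) := hI2.add hI1
  have hIsum : IntegrableOn (fun x : ℝ => Real.exp (-(θ - (-β₂))*x) / d2
      + Real.exp (-(θ - (-β₁))*x) / d1 + Real.exp (-(θ - Φ)*x) / d0) (Ioi 0) := hI21.add hI0
  have hrw : (fun x : ℝ => Real.exp (-θ * x) *
      (Real.exp (-β₂ * x) / d2 + Real.exp (-β₁ * x) / d1 + Real.exp (Φ * x) / d0))
      = fun x : ℝ => Real.exp (-(θ - (-β₂))*x) / d2 + Real.exp (-(θ - (-β₁))*x) / d1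
        + Real.exp (-(θ - Φ)*x) / d0 := funext hfun
  constructor
  · rw [hrw]; exact hIsum
  · rw [hrw]
    rw [integral_add hI21 hI0, integral_add hI2 hI1,
      integral_div, integral_div, integral_div, int_exp ht2, int_exp ht1, int_exp ht0]
    rw [hfac θ hθc, hd2val, hd1val, hdΦval]
    have hne12 : ((-β₂):ℝ) + β₁ ≠ 0 := by intro h; nlinarith
    have hneq2Φ : ((-β₂):ℝ) - Φ ≠ 0 := by intro h; nlinarith
    have hneq1Φ : ((-β₁):ℝ) - Φ ≠ 0 := by intro h; nlinarith
    have hΦ2 : (Φ:ℝ) + β₂ ≠ 0 := by intro h; nlinarith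
    have hΦ1 : (Φ:ℝ) + β₁ ≠ 0 := by intro h; nlinarith
    have hθ2 : θ + β₂ ≠ 0 := by intro h; nlinarith
    have hθ1 : θ + β₁ ≠ 0 := by intro h; nlinarith
    have hθΦ : θ - Φ ≠ 0 := ne_of_gt ht0
    have h2' : θ - -β₂ ≠ 0 := ne_of_gt ht2
    have h1' : θ - -β₁ ≠ 0 := ne_of_gt ht1
    have hne21 : -β₁ + β₂ ≠ 0 := by intro h; linarith
    field_simp
    ring
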